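/- Let B be a C*-algebra over ℂ, n ≥ 1 an integer, and γ a ⋆-algebra automorphism of B with γ^n = id. Then the map φ sending f ∈ Ind to the function t ↦ f(−t/n) on [0,1] is a well-defined ⋆-algebra isomorphism of the induced algebra Ind = {f : ℝ → B continuous | ∀ t, f(t + 1/n) = γ⁻¹(f(t))} onto the mapping cylinder M(γ) = {g : [0,1] → B continuous | g(1) = γ(g(0))}. -/

import Mathlib

/-- The induced algebra `Ind = {f : ℝ → B continuous | ∀ t, f (t + 1/n) = γ⁻¹ (f t)}`,
as a ⋆-subalgebra of `C(ℝ, B)`. -/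
def inducedAlgebra (B : Type*) [NormedRing B] [StarRing B] [CStarRing B]
    [NormedAlgebra ℂ B] [StarModule ℂ B] (n : ℕ) (γ : B ≃⋆ₐ[ℂ] B) :
    StarSubalgebra ℂ C(ℝ, B) where
  carrier := {f | ∀ t : ℝ, f (t + 1 / n) = γ.symm (f t)}
  mul_mem' := by
    intro a b ha hb t
    simp only [ContinuousMap.mul_apply]
    rw [ha t, hb t, map_mul]
  one_mem' := by
    intro t
    simp only [ContinuousMap.one_apply, map_one]
  add_mem' := by
    intro a b ha hb t
    simp only [ContinuousMap.add_apply]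
    rw [ha t, hb t, map_add]
  zero_mem' := by
    intro t
    simp only [ContinuousMap.zero_apply, map_zero]
  algebraMap_mem' := by
    intro r t
    simp only [Algebra.algebraMap_eq_smul_one, ContinuousMap.smul_apply,
      ContinuousMap.one_apply, map_smul, map_one]
  star_mem' := by
    intro a ha t
    simp only [ContinuousMap.star_apply]
    rw [ha t, map_star]

/-- The mapping cylinder `M(γ) = {g : [0,1] → B continuous | g 1 = γ (g 0)}`,
as a ⋆-subalgebra of `C([0,1], B)`. -/
def mappingCylinder (B : Type*) [NormedRing B] [StarRing B] [CStarRing B]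
    [NormedAlgebra ℂ B] [StarModule ℂ B] (γ : B ≃⋆ₐ[ℂ] B) :
    StarSubalgebra ℂ C(Set.Icc (0 : ℝ) 1, B) where
  carrier := {g | g ⟨1, Set.mem_Icc.mpr ⟨zero_le_one, le_refl 1⟩⟩ =
      γ (g ⟨0, Set.mem_Icc.mpr ⟨le_refl 0, zero_le_one⟩⟩)}
  mul_mem' := by
    intro a b ha hb
    simp only [Set.mem_setOf_eq, ContinuousMap.mul_apply] at *
    rw [ha, hb, map_mul]
  one_mem' := by
    simp only [Set.mem_setOf_eq, ContinuousMap.one_apply, map_one]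
  add_mem' := by
    intro a b ha hb
    simp only [Set.mem_setOf_eq, ContinuousMap.add_apply] at *
    rw [ha, hb, map_add]
  zero_mem' := by
    simp only [Set.mem_setOf_eq, ContinuousMap.zero_apply, map_zero]
  algebraMap_mem' := by
    intro r
    simp only [Set.mem_setOf_eq, Algebra.algebraMap_eq_smul_one, ContinuousMap.smul_apply,
      ContinuousMap.one_apply, map_smul, map_one]
  star_mem' := by
    intro a ha
    simp only [Set.mem_setOf_eq, ContinuousMap.star_apply] at *
    rw [ha, map_star]



noncomputable section IndProofAux2




set_option linter.unusedSectionVars false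
set_option maxHeartbeats 800000

open Set

variable {B : Type*} [NormedRing B] [StarRing B] [CStarRing B]
    [NormedAlgebra ℂ B] [StarModule ℂ B] [CompleteSpace B]

lemma myContinuous (γ : B ≃⋆ₐ[ℂ] B) : Continuous ⇑γ := by
  letI : CStarAlgebra B := {}
  exact (NonUnitalStarAlgHom.isometry γ γ.injective).continuous

/-- the underlying permutation of `γ`, to get access to `zpow`. -/
def pe (γ : B ≃⋆ₐ[ℂ] B) : Equiv.Perm B := γ.toRingEquiv.toEquiv

lemma pe_apply (γ : B ≃⋆ₐ[ℂ] B) (x : B) : pe γ x = γ x := rfl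

lemma pe_inv_apply (γ : B ≃⋆ₐ[ℂ] B) (x : B) : (pe γ)⁻¹ x = γ.symm x := rfl

lemma continuous_pe_zpow (γ : B ≃⋆ₐ[ℂ] B) (k : ℤ) : Continuous ⇑(pe γ ^ k) := by
  induction k using Int.induction_on with
  | zero => simpa using continuous_id
  | succ k ih =>
      have h : (pe γ ^ ((k : ℤ) + 1)) = pe γ ^ (k : ℤ) * pe γ := zpow_add_one _ _
      have h2 : ⇑(pe γ ^ ((k : ℤ) + 1)) = ⇑(pe γ ^ (k : ℤ)) ∘ ⇑γ := by
        rw [h]; rfl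
      rw [h2]; exact ih.comp (myContinuous γ)
  | pred k ih =>
      have h : (pe γ ^ (-(k : ℤ) - 1)) = pe γ ^ (-(k : ℤ)) * (pe γ)⁻¹ := zpow_sub_one _ _
      have h2 : ⇑(pe γ ^ (-(k : ℤ) - 1)) = ⇑(pe γ ^ (-(k : ℤ))) ∘ ⇑γ.symm := by
        rw [h]; rfl
      rw [h2]; exact ih.comp (myContinuous γ.symm)

/-- `π^{-k}(γ x) = π^{-(k-1)} x`. -/
lemma pe_zpow_gamma (γ : B ≃⋆ₐ[ℂ] B) (k : ℤ) (x : B) :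
    (pe γ ^ (-k)) (γ x) = (pe γ ^ (-(k - 1))) x := by
  have h : pe γ ^ (-(k - 1)) = pe γ ^ (-k) * pe γ := by
    rw [← zpow_add_one]; ring_nf
  rw [h]; rfl

/-- `π^{-(k+1)} x = γ⁻¹ (π^{-k} x)`. -/
lemma pe_zpow_succ (γ : B ≃⋆ₐ[ℂ] B) (k : ℤ) (x : B) :
    (pe γ ^ (-(k + 1))) x = γ.symm ((pe γ ^ (-k)) x) := by
  have h : pe γ ^ (-(k + 1)) = (pe γ)⁻¹ * pe γ ^ (-k) := by
    rw [← zpow_neg_one, ← zpow_add]; ring_nf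
  rw [h]; rfl

variable (γ : B ≃⋆ₐ[ℂ] B)

/-- Extension of `g : C([0,1], B)` to `ℝ` by projection. -/
def Gmap (g : C(Icc (0:ℝ) 1, B)) : C(ℝ, B) :=
  g.comp ⟨projIcc 0 1 zero_le_one, continuous_projIcc⟩

lemma Gmap_of_mem (g : C(Icc (0:ℝ) 1, B)) {x : ℝ} (hx : x ∈ Icc (0:ℝ) 1) :
    Gmap g x = g ⟨x, hx⟩ := by
  simp only [Gmap, ContinuousMap.comp_apply, ContinuousMap.coe_mk]
  rw [projIcc_of_mem _ hx]

lemma Gmap_one (g : C(Icc (0:ℝ) 1, B))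
    (hg : g ⟨1, Set.mem_Icc.mpr ⟨zero_le_one, le_refl 1⟩⟩ =
      γ (g ⟨0, Set.mem_Icc.mpr ⟨le_refl 0, zero_le_one⟩⟩)) :
    Gmap g 1 = γ (Gmap g 0) := by
  rw [Gmap_of_mem g (by constructor <;> norm_num),
    Gmap_of_mem g (by constructor <;> norm_num)]
  exact hg

variable (n : ℕ)

/-- The candidate inverse function. -/
def Fmap (g : C(Icc (0:ℝ) 1, B)) : ℝ → B :=
  fun t => (pe γ ^ (-⌈(n:ℝ) * t⌉)) (Gmap g (⌈(n:ℝ) * t⌉ - n * t))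

lemma Fmap_agree (g : C(Icc (0:ℝ) 1, B))
    (hg : g ⟨1, Set.mem_Icc.mpr ⟨zero_le_one, le_refl 1⟩⟩ =
      γ (g ⟨0, Set.mem_Icc.mpr ⟨le_refl 0, zero_le_one⟩⟩))
    (k : ℤ) (t : ℝ) (h1 : (k : ℝ) - 1 ≤ n * t) (h2 : (n : ℝ) * t ≤ k) :
    Fmap γ n g t = (pe γ ^ (-k)) (Gmap g (k - n * t)) := by
  rcases h1.lt_or_eq with h | h
  · have hk : ⌈(n:ℝ) * t⌉ = k := Int.ceil_eq_iff.mpr ⟨h, h2⟩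
    simp only [Fmap, hk]
  · -- `n * t = k - 1`
    have hnt : (n : ℝ) * t = ((k - 1 : ℤ) : ℝ) := by push_cast; linarith
    have hk : ⌈(n:ℝ) * t⌉ = k - 1 := by rw [hnt, Int.ceil_intCast]
    have hL : Fmap γ n g t = (pe γ ^ (-(k - 1))) (Gmap g 0) := by
      simp only [Fmap, hk, hnt]
      norm_num
    have hR : (k : ℝ) - (n : ℝ) * t = 1 := by rw [hnt]; push_cast; ring
    rw [hL, hR, Gmap_one γ g hg, pe_zpow_gamma]

lemma Fmap_equivariant (hn : 1 ≤ n) (g : C(Icc (0:ℝ) 1, B)) (t : ℝ) :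
    Fmap γ n g (t + 1 / n) = γ.symm (Fmap γ n g t) := by
  have hn0 : (n : ℝ) ≠ 0 := Nat.cast_ne_zero.mpr (by omega)
  have key : (n : ℝ) * (t + 1 / n) = n * t + 1 := by field_simp
  simp only [Fmap, key, Int.ceil_add_one]
  have harg : ((⌈(n : ℝ) * t⌉ + 1 : ℤ) : ℝ) - ((n : ℝ) * t + 1) =
      (⌈(n : ℝ) * t⌉ : ℝ) - (n : ℝ) * t := by push_cast; ring
  rw [harg, pe_zpow_succ]

lemma Fmap_continuous (hn : 1 ≤ n) (g : C(Icc (0:ℝ) 1, B))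
    (hg : g ⟨1, Set.mem_Icc.mpr ⟨zero_le_one, le_refl 1⟩⟩ =
      γ (g ⟨0, Set.mem_Icc.mpr ⟨le_refl 0, zero_le_one⟩⟩)) :
    Continuous (Fmap γ n g) := by
  have hn0 : (0 : ℝ) ≤ n := Nat.cast_nonneg n
  rw [continuous_iff_continuousAt]
  intro t
  have hcontFk : ∀ k : ℤ, Continuous fun s : ℝ => (pe γ ^ (-k)) (Gmap g (k - n * s)) := by
    intro k
    exact (continuous_pe_zpow γ (-k)).comp
      ((Gmap g).continuous.comp (by continuity))
  rw [continuousAt_iff_continuous_left_right]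
  constructor
  · -- left continuity, with `k = ⌈n t⌉`
    set k := ⌈(n : ℝ) * t⌉ with hk
    have hopen : IsOpen {s : ℝ | (k : ℝ) - 1 < n * s} := by
      have : Continuous fun s : ℝ => (n : ℝ) * s := by continuity
      exact isOpen_lt continuous_const this
    have htmem : t ∈ {s : ℝ | (k : ℝ) - 1 < n * s} := by
      have := Int.ceil_lt_add_one ((n : ℝ) * t)
      simp only [mem_setOf_eq]; linarith
    refine ((hcontFk k).continuousAt.continuousWithinAt).congr_of_eventuallyEq ?_ ?_
    · filter_upwards [mem_nhdsWithin_of_mem_nhds (hopen.mem_nhds htmem),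
        self_mem_nhdsWithin] with s hs1 hs2
      refine Fmap_agree γ n g hg k s (le_of_lt hs1) ?_
      calc (n : ℝ) * s ≤ n * t := by
            exact mul_le_mul_of_nonneg_left hs2 hn0
        _ ≤ k := Int.le_ceil _
    · exact Fmap_agree γ n g hg k t (by linarith [Int.ceil_lt_add_one ((n : ℝ) * t)])
        (Int.le_ceil _)
  · -- right continuity, with `k = ⌊n t⌋ + 1`
    set k := ⌊(n : ℝ) * t⌋ + 1 with hk
    have hopen : IsOpen {s : ℝ | (n : ℝ) * s < k} := by
      have : Continuous fun s : ℝ => (n : ℝ) * s := by continuity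
      exact isOpen_lt this continuous_const
    have htmem : t ∈ {s : ℝ | (n : ℝ) * s < k} := by
      have := Int.lt_floor_add_one ((n : ℝ) * t)
      simp only [mem_setOf_eq, hk]; push_cast; linarith
    have hkfloor : ((k : ℤ) : ℝ) - 1 = ⌊(n : ℝ) * t⌋ := by rw [hk]; push_cast; ring
    refine ((hcontFk k).continuousAt.continuousWithinAt).congr_of_eventuallyEq ?_ ?_
    · filter_upwards [mem_nhdsWithin_of_mem_nhds (hopen.mem_nhds htmem),
        self_mem_nhdsWithin] with s hs1 hs2
      refine Fmap_agree γ n g hg k s ?_ (le_of_lt hs1)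
      rw [hkfloor]
      calc ((⌊(n : ℝ) * t⌋ : ℤ) : ℝ) ≤ n * t := Int.floor_le _
        _ ≤ n * s := mul_le_mul_of_nonneg_left hs2 hn0
    · refine Fmap_agree γ n g hg k t ?_ (le_of_lt htmem)
      rw [hkfloor]; exact Int.floor_le _

lemma shift_lemma (hn : 1 ≤ n) (f : C(ℝ, B))
    (hf : ∀ t : ℝ, f (t + 1 / n) = γ.symm (f t)) (k : ℤ) (t : ℝ) :
    f (t + k / n) = (pe γ ^ (-k)) (f t) := by
  have hn0 : (n : ℝ) ≠ 0 := Nat.cast_ne_zero.mpr (by omega)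
  induction k using Int.induction_on with
  | zero => simp
  | succ k ih =>
      have harg : t + ((k : ℤ) + 1 : ℤ) / (n : ℝ) = (t + (k : ℤ) / n) + 1 / n := by
        push_cast; field_simp; ring
      rw [harg, hf, ih, ← pe_zpow_succ]
  | pred k ih =>
      have harg : (t + (-(k : ℤ) - 1 : ℤ) / (n : ℝ)) + 1 / n = t + (-(k : ℤ) : ℤ) / n := by
        push_cast; field_simp; ring
      have h2 := hf (t + (-(k : ℤ) - 1 : ℤ) / (n : ℝ))
      rw [harg, ih] at h2
      have h3 : f (t + (-(k : ℤ) - 1 : ℤ) / (n : ℝ)) =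
          γ ((pe γ ^ ((k : ℤ))) (f t)) := by
        have := congrArg γ h2
        rw [StarAlgEquiv.apply_symm_apply] at this
        simpa using this.symm
      rw [h3]
      have h4 : (pe γ ^ (-(-(k : ℤ) - 1))) = pe γ * pe γ ^ ((k : ℤ)) := by
        have : -(-(k : ℤ) - 1) = 1 + k := by ring
        rw [this, zpow_add, zpow_one]
      rw [h4]; rfl

end IndProofAux2


section IndProofMain

open Set

variable {B : Type*} [NormedRing B] [StarRing B] [CStarRing B]
    [NormedAlgebra ℂ B] [StarModule ℂ B] [CompleteSpace B]

noncomputable def fwdFun (n : ℕ) (hn : 1 ≤ n) (γ : B ≃⋆ₐ[ℂ] B)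
    (f : inducedAlgebra B n γ) : mappingCylinder B γ := by
  have hn0 : (n : ℝ) ≠ 0 := Nat.cast_ne_zero.mpr (by omega)
  refine ⟨⟨fun t => (f : C(ℝ, B)) (-(t : ℝ) / n),
      (map_continuous (f : C(ℝ, B))).comp (by continuity)⟩, ?_⟩
  have hf : ∀ t : ℝ, (f : C(ℝ, B)) (t + 1 / n) = γ.symm ((f : C(ℝ, B)) t) := f.2
  show (f : C(ℝ, B)) (-(1 : ℝ) / n) = γ ((f : C(ℝ, B)) (-(0 : ℝ) / n))
  have h0 : (-(1 : ℝ) / n + 1 / n) = 0 := by field_simp; ring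
  have h1 := hf (-(1 : ℝ) / n)
  rw [h0] at h1
  have h2 : -(0 : ℝ) / n = 0 := by norm_num
  rw [h2, h1, StarAlgEquiv.apply_symm_apply]

noncomputable def bwdFun (n : ℕ) (hn : 1 ≤ n) (γ : B ≃⋆ₐ[ℂ] B)
    (g : mappingCylinder B γ) : inducedAlgebra B n γ :=
  ⟨⟨Fmap γ n g.1, Fmap_continuous γ n hn g.1 g.2⟩,
    fun t => Fmap_equivariant γ n hn g.1 t⟩

lemma bwd_fwd (n : ℕ) (hn : 1 ≤ n) (γ : B ≃⋆ₐ[ℂ] B) (f : inducedAlgebra B n γ) :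
    bwdFun n hn γ (fwdFun n hn γ f) = f := by
  have hn0 : (n : ℝ) ≠ 0 := Nat.cast_ne_zero.mpr (by omega)
  have hf : ∀ t : ℝ, (f : C(ℝ, B)) (t + 1 / n) = γ.symm ((f : C(ℝ, B)) t) := f.2
  refine Subtype.ext (ContinuousMap.ext fun t => ?_)
  show Fmap γ n (fwdFun n hn γ f).1 t = (f : C(ℝ, B)) t
  set k := ⌈(n : ℝ) * t⌉ with hk
  have hb1 : (0 : ℝ) ≤ (k : ℝ) - n * t := by
    have := Int.le_ceil ((n : ℝ) * t); linarith
  have hb2 : (k : ℝ) - n * t ≤ 1 := by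
    have := Int.ceil_lt_add_one ((n : ℝ) * t); linarith
  have hmem : (k : ℝ) - n * t ∈ Icc (0 : ℝ) 1 := ⟨hb1, hb2⟩
  have hG : Gmap (fwdFun n hn γ f).1 ((k : ℝ) - n * t) =
      (f : C(ℝ, B)) (-((k : ℝ) - n * t) / n) := by
    rw [Gmap_of_mem _ hmem]; rfl
  have harg : -((k : ℝ) - n * t) / n = t - k / n := by field_simp; ring
  have hshift := shift_lemma γ n hn (f : C(ℝ, B)) hf k (t - k / n)
  have harg2 : t - (k : ℝ) / n + k / n = t := by ring
  rw [harg2] at hshift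
  show (pe γ ^ (-k)) (Gmap (fwdFun n hn γ f).1 ((k : ℝ) - n * t)) = (f : C(ℝ, B)) t
  rw [hG, harg, ← hshift]

lemma fwd_bwd (n : ℕ) (hn : 1 ≤ n) (γ : B ≃⋆ₐ[ℂ] B) (g : mappingCylinder B γ) :
    fwdFun n hn γ (bwdFun n hn γ g) = g := by
  have hn0 : (n : ℝ) ≠ 0 := Nat.cast_ne_zero.mpr (by omega)
  refine Subtype.ext (ContinuousMap.ext fun t => ?_)
  show Fmap γ n g.1 (-(t : ℝ) / n) = g.1 t
  have h1 : (n : ℝ) * (-(t : ℝ) / n) = -(t : ℝ) := by field_simp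
  have ht0 : (0 : ℝ) ≤ (t : ℝ) := t.2.1
  have ht1 : (t : ℝ) ≤ 1 := t.2.2
  have := Fmap_agree γ n g.1 g.2 0 (-(t : ℝ) / n)
    (by rw [h1]; push_cast; linarith) (by rw [h1]; push_cast; linarith)
  rw [this]
  have harg : ((0 : ℤ) : ℝ) - (n : ℝ) * (-(t : ℝ) / n) = (t : ℝ) := by
    rw [h1]; push_cast; ring
  rw [harg, Gmap_of_mem g.1 t.2]
  simp

end IndProofMain

/-- Let `B` be a C*-algebra, `n ≥ 1`, and `γ` a ⋆-algebra automorphism of `B` with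
`γ ^ n = id`. Then the map `f ↦ (t ↦ f (-t/n))` is a well-defined ⋆-algebra isomorphism
of the induced algebra `Ind = {f : ℝ → B continuous | ∀ t, f (t + 1/n) = γ⁻¹ (f t)}`
onto the mapping cylinder `M(γ) = {g : [0,1] → B continuous | g 1 = γ (g 0)}`. -/
theorem inducedAlgebra_starAlgEquiv_mappingCylinder (B : Type*) [NormedRing B] [StarRing B]
    [CStarRing B] [NormedAlgebra ℂ B] [StarModule ℂ B] [CompleteSpace B]
    (n : ℕ) (hn : 1 ≤ n) (γ : B ≃⋆ₐ[ℂ] B) (hγ : (⇑γ)^[n] = id) :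
    ∃ φ : inducedAlgebra B n γ ≃⋆ₐ[ℂ] mappingCylinder B γ,
      ∀ (f : inducedAlgebra B n γ) (t : Set.Icc (0 : ℝ) 1),
        ((φ f : C(Set.Icc (0 : ℝ) 1, B)) t) = (f : C(ℝ, B)) (-(t : ℝ) / n) := by
  refine ⟨{
      toFun := fwdFun n hn γ
      invFun := bwdFun n hn γ
      left_inv := bwd_fwd n hn γ
      right_inv := fwd_bwd n hn γ
      map_mul' := ?_
      map_add' := ?_
      map_smul' := ?_
      map_star' := ?_ }, fun f t => rfl⟩ <;>
  · intros
    refine Subtype.ext (ContinuousMap.ext fun t => ?_)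
    simp [fwdFun]
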